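/- If G is a chordal graph, then the projection gap of G is 0; equivalently, for every shortest path P and every vertex x, any two vertices u, w in the projection Pr(x,P) at positions i and k on P with k > i+1 imply the existence of a vertex of Pr(x,P) strictly between them. -/

import Mathlib

open SimpleGraph

variable {V : Type*}

/-- Distance from a vertex to a set of vertices. -/
noncomputable def setDist (G : SimpleGraph V) (x : V) (S : Set V) : ℕ :=
  sInf (G.dist x '' S)

/-- Eccentricity of a set of vertices. -/
noncomputable def eccSet (G : SimpleGraph V) [Fintype V] (S : Set V) : ℕ :=
  Finset.univ.sup fun v => setDist G v S

/-- Eccentricity of a vertex. -/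
noncomputable def eccV (G : SimpleGraph V) [Fintype V] (v : V) : ℕ :=
  Finset.univ.sup fun u => G.dist v u

/-- Diameter of a graph. -/
noncomputable def diamG (G : SimpleGraph V) [Fintype V] : ℕ :=
  Finset.univ.sup fun v => eccV G v

/-- Projection of a vertex onto a set. -/
def proj (G : SimpleGraph V) (x : V) (S : Set V) : Set V :=
  {u ∈ S | G.dist x u = setDist G x S}

/-- The interval between two vertices. -/
def interval (G : SimpleGraph V) (a b : V) : Set V :=
  {w | G.dist a b = G.dist a w + G.dist w b}

/-- Distance-hereditary: distances in connected induced subgraphs equal distances in `G`. -/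
def DistHereditary (G : SimpleGraph V) : Prop :=
  ∀ S : Set V, (G.induce S).Connected →
    ∀ u v : S, (G.induce S).dist u v = G.dist u.1 v.1

/-- A walk is a shortest path. -/
def IsShortestPath (G : SimpleGraph V) {a b : V} (p : G.Walk a b) : Prop :=
  p.IsPath ∧ p.length = G.dist a b

/-- `pg(G) ≤ γ`: for every shortest path `P` starting at `s`, every vertex `x`, and any two
vertices `u, w` of the projection of `x` on `P` with `d(u,w) > γ+1`, some vertex of the
projection lies strictly between them on `P` (positions on `P` equal distances from `s`). -/
def ProjGapLE (G : SimpleGraph V) (γ : ℕ) : Prop :=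
  ∀ (s t : V) (p : G.Walk s t), IsShortestPath G p →
    ∀ (x u w : V), u ∈ proj G x {v | v ∈ p.support} → w ∈ proj G x {v | v ∈ p.support} →
      G.dist s u < G.dist s w → γ + 1 < G.dist u w →
      ∃ z ∈ proj G x {v | v ∈ p.support},
        G.dist s u < G.dist s z ∧ G.dist s z < G.dist s w

/-- A graph is chordal if every cycle with at least four edges has a chord:
an edge of `G` between two vertices of the cycle that is not an edge of the cycle. -/
def IsChordal (G : SimpleGraph V) : Prop :=
  ∀ (v : V) (c : G.Walk v v), c.IsCycle → 4 ≤ c.length →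
    ∃ a b : V, a ∈ c.support ∧ b ∈ c.support ∧ G.Adj a b ∧ s(a, b) ∉ c.edges

namespace PGAux

variable {V : Type*} {G : SimpleGraph V}

lemma adj_dist_le {a b : V} (h : G.Adj a b) : G.dist a b ≤ 1 := by
  simpa using SimpleGraph.dist_le h.toWalk

def chainW (G : SimpleGraph V) (f : ℕ → V) :
    ∀ n : ℕ, (∀ i, i < n → G.Adj (f i) (f (i + 1))) → G.Walk (f 0) (f n)
  | 0, _ => SimpleGraph.Walk.nil
  | n + 1, h =>
      (chainW G f n fun i hi => h i (Nat.lt_succ_of_lt hi)).concat (h n n.lt_succ_self)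

lemma chainW_length (f : ℕ → V) (n : ℕ) (h : ∀ i, i < n → G.Adj (f i) (f (i + 1))) :
    (chainW G f n h).length = n := by
  induction n with
  | zero => rfl
  | succ n ih => simp [chainW, Walk.length_concat, ih]

lemma chainW_support (f : ℕ → V) (n : ℕ) (h : ∀ i, i < n → G.Adj (f i) (f (i + 1))) :
    (chainW G f n h).support = (List.range (n + 1)).map f := by
  induction n with
  | zero => simp [chainW, List.range_succ]
  | succ n ih => simp [chainW, Walk.support_concat, ih, List.range_succ]

lemma chainW_edges (f : ℕ → V) (n : ℕ) (h : ∀ i, i < n → G.Adj (f i) (f (i + 1))) :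
    (chainW G f n h).edges = (List.range n).map (fun i => s(f i, f (i + 1))) := by
  induction n with
  | zero => simp [chainW]
  | succ n ih => simp [chainW, Walk.edges_concat, ih, List.range_succ]

lemma chain_dist_le (f : ℕ → V) {n : ℕ} (h : ∀ i, i < n → G.Adj (f i) (f (i + 1))) :
    ∀ i j, i ≤ j → j ≤ n → G.dist (f i) (f j) ≤ j - i := by
  intro i j hij hjn
  have hadj : ∀ t, t < j - i → G.Adj ((fun t => f (i + t)) t) ((fun t => f (i + t)) (t + 1)) := by
    intro t ht
    have e : i + t + 1 = i + (t + 1) := by omega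
    have := h (i + t) (by omega)
    rwa [e] at this
  have e2 : i + (j - i) = j := by omega
  have := SimpleGraph.dist_le ((chainW G (fun t => f (i + t)) (j - i) hadj).copy
    (show (fun t => f (i + t)) 0 = f i by norm_num)
    (show (fun t => f (i + t)) (j - i) = f j from by show f (i + (j - i)) = f j; rw [e2]))
  simpa [Walk.length_copy, chainW_length] using this

lemma chain_geo (hconn : G.Connected) (f : ℕ → V) {n : ℕ}
    (h : ∀ i, i < n → G.Adj (f i) (f (i + 1))) (hd : n ≤ G.dist (f 0) (f n)) :
    ∀ i j, i ≤ j → j ≤ n → G.dist (f i) (f j) = j - i := by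
  intro i j hij hjn
  have h1 := chain_dist_le f h 0 i (by omega) (by omega)
  have h2 := chain_dist_le f h i j hij hjn
  have h3 := chain_dist_le f h j n hjn le_rfl
  have t1 : G.dist (f 0) (f n) ≤ G.dist (f 0) (f i) + G.dist (f i) (f n) := hconn.dist_triangle
  have t2 : G.dist (f i) (f n) ≤ G.dist (f i) (f j) + G.dist (f j) (f n) := hconn.dist_triangle
  omega

lemma exists_geo (hconn : G.Connected) (x y : V) :
    ∃ r : ℕ → V, r 0 = x ∧ r (G.dist x y) = y ∧
      (∀ i, i < G.dist x y → G.Adj (r i) (r (i + 1))) ∧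
      (∀ i j, i ≤ j → j ≤ G.dist x y → G.dist (r i) (r j) = j - i) := by
  obtain ⟨p, hp⟩ := hconn.exists_walk_length_eq_dist x y
  have hgl : p.getVert (G.dist x y) = y := by rw [← hp]; exact p.getVert_length
  refine ⟨p.getVert, p.getVert_zero, hgl, fun i hi => p.adj_getVert_succ (by omega), ?_⟩
  exact chain_geo hconn p.getVert (fun i hi => p.adj_getVert_succ (by omega))
    (by rw [p.getVert_zero, hgl])

def cycF (r1 r2 g : ℕ → V) (D m α β : ℕ) : ℕ → V := fun i =>
  if i ≤ D - β then r2 (β + i)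
  else if i ≤ D - β + m then g (m - (i - (D - β)))
  else r1 (D - (i - (D - β + m)))

lemma cyc (hconn : G.Connected) (hchordal : IsChordal G)
    (x : V) (D m : ℕ) (g r1 r2 : ℕ → V) (α β : ℕ)
    (hm : 2 ≤ m) (hD : 1 ≤ D)
    (hgadj : ∀ j, j < m → G.Adj (g j) (g (j + 1)))
    (hggeo : ∀ j j', j ≤ j' → j' ≤ m → G.dist (g j) (g j') = j' - j)
    (hr10 : r1 0 = x) (hr1e : r1 D = g 0)
    (hr1adj : ∀ i, i < D → G.Adj (r1 i) (r1 (i + 1)))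
    (hr1geo : ∀ i j, i ≤ j → j ≤ D → G.dist (r1 i) (r1 j) = j - i)
    (hr20 : r2 0 = x) (hr2e : r2 D = g m)
    (hr2adj : ∀ i, i < D → G.Adj (r2 i) (r2 (i + 1)))
    (hr2geo : ∀ i j, i ≤ j → j ≤ D → G.dist (r2 i) (r2 j) = j - i)
    (hxg : ∀ j, j ≤ m → D ≤ G.dist x (g j))
    (hint : ∀ j, 0 < j → j < m → D + 1 ≤ G.dist x (g j))
    (hdisj : ∀ s t, 1 ≤ s → s ≤ D → 1 ≤ t → t ≤ D → r1 s ≠ r2 t)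
    (hα : 1 ≤ α) (hαD : α ≤ D) (hβD : β + 1 ≤ D)
    (hadj : G.Adj (r1 α) (r2 β))
    (hmax : ∀ a b, α ≤ a → a ≤ D → β ≤ b → b ≤ D → 1 ≤ a → 1 ≤ b →
      ¬(a = α ∧ b = β) → ¬ G.Adj (r1 a) (r2 b)) :
    False := by
  set F : ℕ → V := cycF r1 r2 g D m α β with hFdef
  set n : ℕ := (D - β) + m + (D - α) with hn
  -- accessors
  have hFA : ∀ i, i ≤ D - β → F i = r2 (β + i) := by
    intro i hi; simp only [hFdef, cycF]; rw [if_pos hi]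
  have hFB : ∀ i, D - β < i → i ≤ D - β + m → F i = g (m - (i - (D - β))) := by
    intro i h1 h2; simp only [hFdef, cycF]; rw [if_neg (by omega), if_pos h2]
  have hFC : ∀ i, D - β + m < i → F i = r1 (D - (i - (D - β + m))) := by
    intro i h1; simp only [hFdef, cycF]; rw [if_neg (by omega), if_neg (by omega)]
  have hF0 : F 0 = r2 β := by rw [hFA 0 (by omega)]; norm_num
  have hFn : F n = r1 α := by
    by_cases hc : α = D
    · rw [hFB n (by omega) (by omega), show m - (n - (D - β)) = 0 by omega, ← hr1e, hc]
    · rw [hFC n (by omega), show D - (n - (D - β + m)) = α by omega]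
  -- level helpers
  have hxr1 : ∀ t, t ≤ D → G.dist x (r1 t) = t := by
    intro t ht; have := hr1geo 0 t (by omega) ht; rw [hr10] at this; simpa using this
  have hxr2 : ∀ t, t ≤ D → G.dist x (r2 t) = t := by
    intro t ht; have := hr2geo 0 t (by omega) ht; rw [hr20] at this; simpa using this
  have hginj : ∀ j j', j ≤ m → j' ≤ m → g j = g j' → j = j' := by
    intro j j' hj hj' he
    rcases le_total j j' with h | h
    · have := hggeo j j' h hj'; rw [he, SimpleGraph.dist_self] at this; omega
    · have := hggeo j' j h hj; rw [he, SimpleGraph.dist_self] at this; omega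
  have hr1inj : ∀ t t', t ≤ D → t' ≤ D → r1 t = r1 t' → t = t' := by
    intro t t' ht ht' he
    have h1 := hxr1 t ht; have h2 := hxr1 t' ht'; rw [he] at h1; omega
  have hr2inj : ∀ t t', t ≤ D → t' ≤ D → r2 t = r2 t' → t = t' := by
    intro t t' ht ht' he
    have h1 := hxr2 t ht; have h2 := hxr2 t' ht'; rw [he] at h1; omega
  have hr2g : ∀ s j, s ≤ D → j ≤ m → r2 s = g j → s = D ∧ j = m := by
    intro s j hs hj he
    have h1 : G.dist x (g j) = s := by rw [← he]; exact hxr2 s hs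
    have h2 := hxg j hj
    have hsD : s = D := by omega
    refine ⟨hsD, ?_⟩
    have := hginj m j le_rfl hj (by rw [← hr2e, ← hsD, he])
    omega
  have hr1g : ∀ t j, t ≤ D → j ≤ m → r1 t = g j → t = D ∧ j = 0 := by
    intro t j ht hj he
    have h1 : G.dist x (g j) = t := by rw [← he]; exact hxr1 t ht
    have h2 := hxg j hj
    have htD : t = D := by omega
    refine ⟨htD, ?_⟩
    have := hginj 0 j (by omega) hj (by rw [← hr1e, ← htD, he])
    omega
  have hr1r2 : ∀ t s, t ≤ D → s ≤ D → r1 t = r2 s → t = 0 ∧ s = 0 := by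
    intro t s ht hs he
    have h1 := hxr1 t ht; have h2 := hxr2 s hs
    rw [he] at h1
    have hts : t = s := by omega
    by_cases h : 1 ≤ t
    · exact absurd he (hdisj t s h ht (by omega) hs)
    · omega
  have htri : ∀ (a b : V), G.Adj a b → ∀ t, G.dist x a = t → G.dist x b ≤ t + 1 := by
    intro a b hab t hta
    have t1 : G.dist x b ≤ G.dist x a + G.dist a b := hconn.dist_triangle
    have t2 := adj_dist_le hab
    omega
  have hinj : ∀ i i', i ≤ n → i' ≤ n → F i = F i' → i = i' := by
    suffices H : ∀ i i', i ≤ n → i' ≤ n → i < i' → F i ≠ F i' by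
      intro i i' hi hi' he
      rcases lt_trichotomy i i' with h | h | h
      · exact absurd he (H i i' hi hi' h)
      · exact h
      · exact absurd he.symm (H i' i hi' hi h)
    intro i i' hi hi' hlt he
    by_cases c1 : i ≤ D - β
    · rw [hFA i c1] at he
      by_cases c1' : i' ≤ D - β
      · rw [hFA i' c1'] at he
        have := hr2inj _ _ (by omega) (by omega) he; omega
      · by_cases c2' : i' ≤ D - β + m
        · rw [hFB i' (by omega) c2'] at he
          have := hr2g _ _ (by omega) (by omega) he
          omega
        · rw [hFC i' (by omega)] at he
          have := hr1r2 _ _ (by omega) (by omega) he.symm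
          omega
    · by_cases c2 : i ≤ D - β + m
      · rw [hFB i (by omega) c2] at he
        by_cases c2' : i' ≤ D - β + m
        · rw [hFB i' (by omega) c2'] at he
          have := hginj _ _ (by omega) (by omega) he
          omega
        · rw [hFC i' (by omega)] at he
          have := hr1g _ _ (by omega) (by omega) he.symm
          omega
      · have ci : D - β + m < i := by omega
        rw [hFC i ci, hFC i' (by omega)] at he
        have := hr1inj _ _ (by omega) (by omega) he
        omega
  have hnoc : ∀ i i', i + 2 ≤ i' → i' ≤ n → ¬(i = 0 ∧ i' = n) → ¬ G.Adj (F i) (F i') := by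
    intro i i' h2 hi' hne hadj'
    by_cases c1 : i ≤ D - β
    · rw [hFA i c1] at hadj'
      by_cases c1' : i' ≤ D - β
      · rw [hFA i' c1'] at hadj'
        have hd := adj_dist_le hadj'
        rw [hr2geo (β + i) (β + i') (by omega) (by omega)] at hd
        omega
      · by_cases c2' : i' ≤ D - β + m
        · rw [hFB i' (by omega) c2'] at hadj'
          have hstep : G.dist x (g (m - (i' - (D - β)))) ≤ (β + i) + 1 :=
            htri _ _ hadj' _ (hxr2 (β + i) (by omega))
          by_cases hj0 : 1 ≤ m - (i' - (D - β))
          · have hi1 := hint (m - (i' - (D - β))) hj0 (by omega)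
            have hiD : β + i = D := by omega
            rw [hiD, hr2e] at hadj'
            have hd := adj_dist_le hadj'
            rw [SimpleGraph.dist_comm,
              hggeo (m - (i' - (D - β))) m (by omega) le_rfl] at hd
            omega
          · have hj0' : m - (i' - (D - β)) = 0 := by omega
            rw [hj0', ← hr1e] at hadj'
            have hgd : G.dist x (g 0) = D := by
              rw [← hr1e]; exact hxr1 D le_rfl
            have hs1 : D ≤ β + i + 1 := by rw [hj0'] at hstep; omega
            by_cases hsD : β + i = D
            · rw [hsD, hr2e] at hadj'
              have hd := adj_dist_le hadj'
              rw [hr1e, SimpleGraph.dist_comm, hggeo 0 m (by omega) le_rfl] at hd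
              omega
            · by_cases hs0 : 1 ≤ β + i
              · by_cases heq : D = α ∧ β + i = β
                · exact hne ⟨by omega, by omega⟩
                · exact hmax D (β + i) hαD le_rfl (by omega) (by omega) hD hs0 heq
                    hadj'.symm
              · have hβi : β + i = 0 := by omega
                exact hne ⟨by omega, by omega⟩
        · rw [hFC i' (by omega)] at hadj'
          by_cases hs0 : 1 ≤ β + i
          · by_cases heq : D - (i' - (D - β + m)) = α ∧ β + i = β
            · exact hne ⟨by omega, by omega⟩
            · exact hmax (D - (i' - (D - β + m))) (β + i) (by omega) (by omega) (by omega)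
                (by omega) (by omega) hs0 heq hadj'.symm
          · have hβi : β + i = 0 := by omega
            rw [hβi, hr20] at hadj'
            have hd := adj_dist_le hadj'
            have hx1 := hxr1 (D - (i' - (D - β + m))) (by omega)
            exact hne ⟨by omega, by omega⟩
    · by_cases c2 : i ≤ D - β + m
      · rw [hFB i (by omega) c2] at hadj'
        by_cases c2' : i' ≤ D - β + m
        · rw [hFB i' (by omega) c2'] at hadj'
          have hd := adj_dist_le hadj'
          rw [SimpleGraph.dist_comm,
            hggeo (m - (i' - (D - β))) (m - (i - (D - β))) (by omega) (by omega)] at hd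
          omega
        · rw [hFC i' (by omega)] at hadj'
          have hbd : G.dist x (g (m - (i - (D - β)))) ≤ (D - (i' - (D - β + m))) + 1 :=
            htri _ _ hadj'.symm _ (hxr1 _ (by omega))
          by_cases hj1 : 1 ≤ m - (i - (D - β))
          · have := hint (m - (i - (D - β))) hj1 (by omega)
            omega
          · have hj0 : m - (i - (D - β)) = 0 := by omega
            rw [hj0, ← hr1e] at hadj'
            have hd := adj_dist_le hadj'
            rw [SimpleGraph.dist_comm,
              hr1geo (D - (i' - (D - β + m))) D (by omega) le_rfl] at hd
            omega
      · have ci : D - β + m < i := by omega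
        rw [hFC i ci, hFC i' (by omega)] at hadj'
        have hd := adj_dist_le hadj'
        rw [SimpleGraph.dist_comm,
          hr1geo (D - (i' - (D - β + m))) (D - (i - (D - β + m))) (by omega) (by omega)] at hd
        omega
  have hadjF : ∀ i, i < n → G.Adj (F i) (F (i + 1)) := by
    intro i hi
    by_cases c1 : i + 1 ≤ D - β
    · rw [hFA i (by omega), hFA (i + 1) c1, show β + (i + 1) = (β + i) + 1 by omega]
      exact hr2adj (β + i) (by omega)
    · by_cases c2 : i + 1 ≤ D - β + m
      · rw [hFB (i + 1) (by omega) c2]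
        by_cases c3 : i ≤ D - β
        · rw [hFA i c3, show β + i = D by omega, hr2e,
            show m - (i + 1 - (D - β)) = m - 1 by omega]
          have := hgadj (m - 1) (by omega)
          rw [show m - 1 + 1 = m by omega] at this
          exact this.symm
        · rw [hFB i (by omega) (by omega)]
          have e : m - (i - (D - β)) = (m - (i + 1 - (D - β))) + 1 := by omega
          rw [e]
          exact (hgadj _ (by omega)).symm
      · rw [hFC (i + 1) (by omega)]
        by_cases c3 : i ≤ D - β + m
        · rw [hFB i (by omega) c3, show m - (i - (D - β)) = 0 by omega, ← hr1e,
            show D - (i + 1 - (D - β + m)) = D - 1 by omega]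
          have := hr1adj (D - 1) (by omega)
          rw [show D - 1 + 1 = D by omega] at this
          exact this.symm
        · rw [hFC i (by omega)]
          have e : D - (i - (D - β + m)) = (D - (i + 1 - (D - β + m))) + 1 := by omega
          rw [e]
          exact (hr1adj _ (by omega)).symm
  -- assemble the cycle
  have hsupp : ((chainW G F n hadjF).copy hF0 hFn).support = (List.range (n + 1)).map F := by
    rw [Walk.support_copy, chainW_support]
  have hedges : ((chainW G F n hadjF).copy hF0 hFn).edges
      = (List.range n).map (fun i => s(F i, F (i + 1))) := by
    rw [Walk.edges_copy, chainW_edges]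
  have hpath : ((chainW G F n hadjF).copy hF0 hFn).IsPath := by
    apply Walk.IsPath.mk'
    rw [hsupp]
    refine List.Nodup.map_on ?_ List.nodup_range
    intro a ha b hb he
    exact hinj a b (by have := List.mem_range.mp ha; omega)
      (by have := List.mem_range.mp hb; omega) he
  have hnotedge : s(r1 α, r2 β) ∉ ((chainW G F n hadjF).copy hF0 hFn).edges := by
    rw [hedges]
    intro hmem'
    obtain ⟨i, hi, he⟩ := List.mem_map.mp hmem'
    have hilt := List.mem_range.mp hi
    rcases Sym2.eq_iff.mp he with ⟨h1, h2⟩ | ⟨h1, h2⟩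
    · have := hinj i n (by omega) le_rfl (by rw [h1, hFn])
      omega
    · have e1 := hinj (i + 1) n (by omega) le_rfl (by rw [h2, hFn])
      have e2 := hinj i 0 (by omega) (by omega) (by rw [h1, hF0])
      omega
  have hcyc : (Walk.cons hadj ((chainW G F n hadjF).copy hF0 hFn)).IsCycle :=
    (Walk.cons_isCycle_iff _ hadj).mpr ⟨hpath, hnotedge⟩
  have hlen : 4 ≤ (Walk.cons hadj ((chainW G F n hadjF).copy hF0 hFn)).length := by
    rw [Walk.length_cons, Walk.length_copy, chainW_length]
    omega
  obtain ⟨a, b, ha, hb, hab, hnab⟩ := hchordal (r1 α) _ hcyc hlen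
  have hmem : ∀ y, y ∈ (Walk.cons hadj ((chainW G F n hadjF).copy hF0 hFn)).support →
      ∃ i, i ≤ n ∧ y = F i := by
    intro y hy
    rw [Walk.support_cons, hsupp] at hy
    rcases List.mem_cons.mp hy with h | h
    · exact ⟨n, le_rfl, by rw [h, hFn]⟩
    · obtain ⟨i, hi, he⟩ := List.mem_map.mp h
      have := List.mem_range.mp hi
      exact ⟨i, by omega, he.symm⟩
  have hedgemem : ∀ i, i < n →
      s(F i, F (i + 1)) ∈ (Walk.cons hadj ((chainW G F n hadjF).copy hF0 hFn)).edges := by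
    intro i hi
    rw [Walk.edges_cons]
    exact List.mem_cons_of_mem _
      (by rw [hedges]; exact List.mem_map.mpr ⟨i, List.mem_range.mpr hi, rfl⟩)
  have hclose : s(r1 α, r2 β) ∈ (Walk.cons hadj ((chainW G F n hadjF).copy hF0 hFn)).edges := by
    rw [Walk.edges_cons]
    exact List.mem_cons_self
  obtain ⟨i, hi, rfl⟩ := hmem a ha
  obtain ⟨i', hi', rfl⟩ := hmem b hb
  have main : ∀ j j', j ≤ n → j' ≤ n → j < j' → G.Adj (F j) (F j') →
      s(F j, F j') ∈ (Walk.cons hadj ((chainW G F n hadjF).copy hF0 hFn)).edges := by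
    intro j j' hj hj' hlt hadj'
    by_cases hcons : j' = j + 1
    · subst hcons; exact hedgemem j (by omega)
    · by_cases hend : j = 0 ∧ j' = n
      · obtain ⟨rfl, rfl⟩ := hend
        have heq : s(F 0, F n) = s(r1 α, r2 β) := by rw [hF0, hFn, Sym2.eq_swap]
        rw [heq]
        exact hclose
      · exact absurd hadj' (hnoc j j' (by omega) hj' hend)
  rcases lt_trichotomy i i' with h | h | h
  · exact hnab (main i i' hi hi' h hab)
  · exact hab.ne (by rw [h])
  · have := main i' i hi' hi h hab.symm
    rw [Sym2.eq_swap] at hnab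
    exact hnab this

lemma key (hconn : G.Connected) (hchordal : IsChordal G) :
    ∀ D : ℕ, ∀ (x : V) (m : ℕ) (g : ℕ → V),
      (∀ j, j < m → G.Adj (g j) (g (j + 1))) →
      (∀ j j', j ≤ j' → j' ≤ m → G.dist (g j) (g j') = j' - j) →
      2 ≤ m → G.dist x (g 0) = D → G.dist x (g m) = D →
      (∀ j, j ≤ m → D ≤ G.dist x (g j)) →
      ∃ j, 0 < j ∧ j < m ∧ G.dist x (g j) = D := by
  intro D
  induction D using Nat.strong_induction_on with
  | _ D IH =>
  intro x m g hgadj hggeo hm hx0 hxm hlow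
  rcases Nat.eq_zero_or_pos D with hD0 | hD
  · exfalso
    subst hD0
    have h1 : x = g 0 := (hconn.dist_eq_zero_iff).mp hx0
    have h2 : x = g m := (hconn.dist_eq_zero_iff).mp hxm
    have := hggeo 0 m (by omega) le_rfl
    rw [← h1, ← h2, SimpleGraph.dist_self] at this
    omega
  obtain ⟨r1, hr10, hr1e, hr1adj, hr1geo⟩ := exists_geo hconn x (g 0)
  rw [hx0] at hr1e hr1adj hr1geo
  obtain ⟨r2, hr20, hr2e, hr2adj, hr2geo⟩ := exists_geo hconn x (g m)
  rw [hxm] at hr2e hr2adj hr2geo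
  have hxr1 : ∀ t, t ≤ D → G.dist x (r1 t) = t := by
    intro t ht; have := hr1geo 0 t (by omega) ht; rw [hr10] at this; simpa using this
  have hxr2 : ∀ t, t ≤ D → G.dist x (r2 t) = t := by
    intro t ht; have := hr2geo 0 t (by omega) ht; rw [hr20] at this; simpa using this
  by_cases hcom : ∃ s, 1 ≤ s ∧ s ≤ D ∧ r1 s = r2 s
  · obtain ⟨s, hs1, hsD, hse⟩ := hcom
    have hc1 : G.dist (r1 s) (g 0) = D - s := by
      have := hr1geo s D hsD le_rfl; rw [hr1e] at this; exact this
    have hc2 : G.dist (r1 s) (g m) = D - s := by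
      rw [hse]; have := hr2geo s D hsD le_rfl; rw [hr2e] at this; exact this
    have hxc : G.dist x (r1 s) = s := hxr1 s hsD
    have hclow : ∀ j, j ≤ m → D - s ≤ G.dist (r1 s) (g j) := by
      intro j hj
      have ht : G.dist x (g j) ≤ G.dist x (r1 s) + G.dist (r1 s) (g j) := hconn.dist_triangle
      have := hlow j hj
      omega
    obtain ⟨j, hj1, hj2, hje⟩ := IH (D - s) (by omega) (r1 s) m g hgadj hggeo hm hc1 hc2 hclow
    refine ⟨j, hj1, hj2, ?_⟩
    have h1 : G.dist x (g j) ≤ G.dist x (r1 s) + G.dist (r1 s) (g j) := hconn.dist_triangle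
    have := hlow j (by omega)
    omega
  · push_neg at hcom
    have hdisj : ∀ s t, 1 ≤ s → s ≤ D → 1 ≤ t → t ≤ D → r1 s ≠ r2 t := by
      intro s t hs1 hsD ht1 htD he
      by_cases hst : s = t
      · exact hcom s hs1 hsD (hst ▸ he)
      · have h1 := hxr1 s hsD
        have h2 := hxr2 t htD
        rw [he] at h1
        omega
    by_contra hno
    push_neg at hno
    have hint : ∀ j, 0 < j → j < m → D + 1 ≤ G.dist x (g j) := by
      intro j h1 h2
      have := hlow j (by omega)
      have := hno j h1 h2
      omega
    classical
    set A : Finset (ℕ × ℕ) := ((Finset.range (D + 1)) ×ˢ (Finset.range (D + 1))).filter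
        (fun q => 1 ≤ q.1 ∧ 1 ≤ q.2 ∧ G.Adj (r1 q.1) (r2 q.2)) with hA
    have hmemA : ∀ a b : ℕ, a ≤ D → b ≤ D → 1 ≤ a → 1 ≤ b → G.Adj (r1 a) (r2 b) →
        (a, b) ∈ A := by
      intro a b h1 h2 h3 h4 h5
      rw [hA, Finset.mem_filter, Finset.mem_product, Finset.mem_range, Finset.mem_range]
      exact ⟨⟨by omega, by omega⟩, h3, h4, h5⟩
    rcases A.eq_empty_or_nonempty with hAe | hAne
    · refine cyc hconn hchordal x D m g r1 r2 1 0 hm hD hgadj hggeo hr10 hr1e hr1adj hr1geo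
        hr20 hr2e hr2adj hr2geo (fun j hj => hlow j hj) hint hdisj le_rfl hD (by omega)
        ?_ ?_
      · rw [hr20, ← hr10]
        exact (hr1adj 0 (by omega)).symm
      · intro a b ha1 haD hb0 hbD ha1' hb1 hne hadj'
        have := hmemA a b haD hbD ha1' hb1 hadj'
        rw [hAe] at this
        exact absurd this (Finset.notMem_empty _)
    · obtain ⟨q, hqA, hqmax⟩ := A.exists_max_image (fun q => q.1 + q.2) hAne
      obtain ⟨α, β⟩ := q
      rw [hA, Finset.mem_filter, Finset.mem_product, Finset.mem_range, Finset.mem_range] at hqA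
      obtain ⟨⟨hαr, hβr⟩, hα1, hβ1, hadjq⟩ := hqA
      dsimp only at hqmax hαr hβr hα1 hβ1 hadjq
      have hnotDD : ¬(α = D ∧ β = D) := by
        rintro ⟨rfl, rfl⟩
        have hd := adj_dist_le hadjq
        rw [hr1e, hr2e, hggeo 0 m (by omega) le_rfl] at hd
        omega
      by_cases hβD : β + 1 ≤ D
      · refine cyc hconn hchordal x D m g r1 r2 α β hm hD hgadj hggeo hr10 hr1e hr1adj hr1geo
          hr20 hr2e hr2adj hr2geo (fun j hj => hlow j hj) hint hdisj hα1 (by omega) hβD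
          hadjq ?_
        intro a b haα haD hbβ hbD ha1 hb1 hne hadj'
        have hsum : a + b ≤ α + β := hqmax (a, b) (hmemA a b haD hbD ha1 hb1 hadj')
        omega
      · have hβ : β = D := by omega
        have hα1' : α + 1 ≤ D := by omega
        refine cyc hconn hchordal x D m (fun j => g (m - j)) r2 r1 β α hm hD ?_ ?_
          hr20 (by simpa using hr2e) hr2adj hr2geo
          hr10 (by simpa using hr1e) hr1adj hr1geo
          (fun j hj => hlow (m - j) (by omega))
          (fun j h1 h2 => hint (m - j) (by omega) (by omega)) ?_ hβ1 (by omega) hα1'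
          hadjq.symm ?_
        · intro j hj
          show G.Adj (g (m - j)) (g (m - (j + 1)))
          have e : m - j = (m - (j + 1)) + 1 := by omega
          rw [e]
          exact (hgadj _ (by omega)).symm
        · intro j j' h1 h2
          show G.dist (g (m - j)) (g (m - j')) = j' - j
          rw [SimpleGraph.dist_comm]
          have := hggeo (m - j') (m - j) (by omega) (by omega)
          rw [this]
          omega
        · intro s t hs1 hsD ht1 htD he
          exact hdisj t s ht1 htD hs1 hsD he.symm
        · intro a b hβa haD hαb hbD h1a h1b hne hadj'
          have hsum : b + a ≤ α + β := hqmax (b, a) (hmemA b a hbD haD h1b h1a hadj'.symm)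
          omega

end PGAux

theorem stmt_12 {V : Type*} [Fintype V] (G : SimpleGraph V) (hconn : G.Connected)
    (hchordal : IsChordal G) :
    ProjGapLE G 0 := by
  intro s t p hsp x u w hu hw hlt hgap
  obtain ⟨hpath, hplen⟩ := hsp
  have hchain : ∀ i, i < p.length → G.Adj (p.getVert i) (p.getVert (i + 1)) :=
    fun i hi => p.adj_getVert_succ hi
  have hgeo : ∀ i j, i ≤ j → j ≤ p.length → G.dist (p.getVert i) (p.getVert j) = j - i := by
    apply PGAux.chain_geo hconn p.getVert hchain
    rw [p.getVert_zero, p.getVert_length]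
    omega
  obtain ⟨i, hieq, hile⟩ := SimpleGraph.Walk.mem_support_iff_exists_getVert.mp hu.1
  obtain ⟨k, hkeq, hkle⟩ := SimpleGraph.Walk.mem_support_iff_exists_getVert.mp hw.1
  have hdsu : G.dist s u = i := by
    rw [← hieq]
    have := hgeo 0 i (by omega) hile
    rw [p.getVert_zero] at this
    simpa using this
  have hdsw : G.dist s w = k := by
    rw [← hkeq]
    have := hgeo 0 k (by omega) hkle
    rw [p.getVert_zero] at this
    simpa using this
  have hik : i < k := by omega
  have hduw : G.dist u w = k - i := by
    rw [← hieq, ← hkeq]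
    exact hgeo i k (by omega) hkle
  have hm : 2 ≤ k - i := by omega
  have hlowD : ∀ v, v ∈ p.support → setDist G x {v | v ∈ p.support} ≤ G.dist x v := by
    intro v hv
    exact Nat.sInf_le ⟨v, hv, rfl⟩
  have hmemsup : ∀ j, j ≤ k - i → p.getVert (i + j) ∈ p.support := by
    intro j hj
    exact SimpleGraph.Walk.mem_support_iff_exists_getVert.mpr ⟨i + j, rfl, by omega⟩
  obtain ⟨j, hj1, hj2, hjd⟩ := PGAux.key hconn hchordal (setDist G x {v | v ∈ p.support})
    x (k - i) (fun j => p.getVert (i + j))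
    (by
      intro j hj
      have := hchain (i + j) (by omega)
      show G.Adj (p.getVert (i + j)) (p.getVert (i + (j + 1)))
      rw [show i + (j + 1) = (i + j) + 1 by omega]
      exact this)
    (by
      intro j j' h1 h2
      show G.dist (p.getVert (i + j)) (p.getVert (i + j')) = j' - j
      have := hgeo (i + j) (i + j') (by omega) (by omega)
      rw [this]
      omega)
    hm
    (by
      show G.dist x (p.getVert (i + 0)) = _
      rw [show i + 0 = i by omega, hieq]
      exact hu.2)
    (by
      show G.dist x (p.getVert (i + (k - i))) = _
      rw [show i + (k - i) = k by omega, hkeq]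
      exact hw.2)
    (fun j hj => hlowD _ (hmemsup j hj))
  refine ⟨p.getVert (i + j), ⟨hmemsup j (by omega), hjd⟩, ?_, ?_⟩
  · have := hgeo 0 (i + j) (by omega) (by omega)
    rw [p.getVert_zero] at this
    omega
  · have := hgeo 0 (i + j) (by omega) (by omega)
    rw [p.getVert_zero] at this
    omega
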